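/- Let Δ be a finite alphabet, h a substitution on Δ (a monoid morphism of words over Δ) such that h(x) is a nonempty word for every letter x ∈ Δ, let d ∈ Δ and let α ≥ 1 be an integer. Then there exists a 2-iterated pushdown automaton with input alphabet Δ that accepts a word u ∈ Δ* if and only if u = (h^k(d))^α for some natural number k, where h^k is the k-th iterate of h. -/

import Mathlib

/-- Operations on a 2-level iterated pushdown store. -/
inductive Op (Γ : Type*) where
  | pop1 : Op Γ
  | pop2 : Op Γ
  | push1 : List Γ → Op Γ
  | push2 : List Γ → Op Γ

/-- A 2-level pushdown store: a finite list of entries `(A, s)` with `A` a letter of `Γ`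
and `s ∈ Γ*` the inner store of the entry. -/
abbrev Store (Γ : Type*) := List (Γ × List Γ)

/-- The top symbols of a 2-level store: the letter of the top entry followed by the first
letter of its inner store when that inner store is nonempty; an element of `Γ ∪ Γ²`. -/
def topsym {Γ : Type*} : Store Γ → List Γ
  | [] => []
  | (A, s) :: _ => A :: s.take 1

/-- Apply an operation to a 2-level store (a partial operation):
`pop1` removes the top entry; `pop2` removes the first letter of the inner store of the
top entry (when nonempty); `push1 w` replaces the top entry `(A, s)` by the entries
`(w_1, s), …, (w_m, s)`; `push2 u` replaces the top entry `(A, s)` by `(A, u ++ s)`. -/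
def applyOp {Γ : Type*} : Op Γ → Store Γ → Option (Store Γ)
  | .pop1, _ :: rest => some rest
  | .pop2, (A, _ :: s) :: rest => some ((A, s) :: rest)
  | .push1 w, (_, s) :: rest => some (w.map (fun x => (x, s)) ++ rest)
  | .push2 u, (A, s) :: rest => some ((A, u ++ s) :: rest)
  | _, _ => none

/-- A 2-iterated pushdown automaton with state set `Q`, input alphabet `In` and store
alphabet `Γ`: an initial state `q0`, an initial store symbol `Z`, and a transition table
`δ` assigning to each triple `(q, a, t)` — with `a ∈ In ∪ {ε}` and `t ∈ Γ ∪ Γ²` — a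
finite set (list) of instructions `(q', op)`. -/
structure IPDA2 (Q In Γ : Type*) where
  q0 : Q
  Z : Γ
  δ : Q → Option In → List Γ → List (Q × Op Γ)

/-- A configuration: current state, remaining input word, current 2-level store. -/
abbrev Config (Q In Γ : Type*) := Q × List In × Store Γ

/-- One computation step: an instruction from `δ(q, a, topsym ω)` may be applied, where
`a = ε` (no input consumed) or `a` is the first letter of the remaining input (which is
then consumed); the state changes to `q'` and the operation is applied to the store. -/
inductive IPDA2.Step {Q In Γ : Type*} (M : IPDA2 Q In Γ) :
    Config Q In Γ → Config Q In Γ → Prop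
  | eps {q q' : Q} {w : List In} {ω ω' : Store Γ} {op : Op Γ} :
      (q', op) ∈ M.δ q none (topsym ω) → applyOp op ω = some ω' →
      M.Step (q, w, ω) (q', w, ω')
  | read {q q' : Q} {a : In} {w : List In} {ω ω' : Store Γ} {op : Op Γ} :
      (q', op) ∈ M.δ q (some a) (topsym ω) → applyOp op ω = some ω' →
      M.Step (q, a :: w, ω) (q', w, ω')

/-- A finite sequence of computation steps. -/
def IPDA2.Steps {Q In Γ : Type*} (M : IPDA2 Q In Γ) :
    Config Q In Γ → Config Q In Γ → Prop :=
  Relation.ReflTransGen M.Step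

/-- Acceptance: some finite sequence of steps leads from the initial configuration
`(q0, w, [(Z, ε)])` to a configuration with empty remaining input and empty store. -/
def IPDA2.Accepts {Q In Γ : Type*} (M : IPDA2 Q In Γ) (w : List In) : Prop :=
  ∃ q : Q, M.Steps (M.q0, w, [(M.Z, [])]) (q, [], [])


section Aux

variable {Δ : Type} (h : Δ → List Δ) (d : Δ) (α : ℕ)

/-- `flatI h j l` is the `j`-fold application of the substitution `h` to the word `l`. -/
def flatI (j : ℕ) (l : List Δ) : List Δ := (fun w => w.flatMap h)^[j] l

lemma flatI_zero (l : List Δ) : flatI h 0 l = l := rfl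

lemma flatI_succ (j : ℕ) (l : List Δ) : flatI h (j + 1) l = flatI h j (l.flatMap h) :=
  Function.iterate_succ_apply _ _ _

lemma flatI_nil (j : ℕ) : flatI h j [] = [] := by
  induction j with
  | zero => rfl
  | succ j ih => rw [flatI_succ]; simpa using ih

lemma flatI_append (j : ℕ) (a b : List Δ) :
    flatI h j (a ++ b) = flatI h j a ++ flatI h j b := by
  induction j generalizing a b with
  | zero => rfl
  | succ j ih => rw [flatI_succ, List.flatMap_append, ih, flatI_succ, flatI_succ]

lemma flatI_cons (j : ℕ) (x : Δ) (l : List Δ) :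
    flatI h j (x :: l) = flatI h j [x] ++ flatI h j l := by
  have := flatI_append h j [x] l
  simpa using this

lemma flatI_single (j : ℕ) (x : Δ) : flatI h (j + 1) [x] = flatI h j (h x) := by
  rw [flatI_succ]; simp

lemma flatI_eq_flatten (j : ℕ) (l : List Δ) :
    flatI h j l = (l.map (fun y => flatI h j [y])).flatten := by
  induction l with
  | nil => simp [flatI_nil]
  | cons x l ih => rw [flatI_cons, ih]; simp

lemma flatI_replicate (k : ℕ) :
    flatI h k (List.replicate α d) = (List.replicate α (flatI h k [d])).flatten := by
  induction α with
  | zero => simp [flatI_nil]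
  | succ n ih =>
      rw [List.replicate_succ, flatI_cons, ih, List.replicate_succ, List.flatten_cons]

open Classical in
/-- The 2-iterated pushdown automaton accepting `{ (h^k(d))^α : k ∈ ℕ }`. -/
noncomputable def Mach : IPDA2 (Option Bool) Δ (Δ ⊕ Bool) where
  q0 := none
  Z := Sum.inr true
  δ := fun q a t =>
    match q, a, t with
    | none, none, Sum.inr true :: _ =>
        [(none, Op.push2 [Sum.inr false]),
         (some false, Op.push1 (List.replicate α (Sum.inl d)))]
    | some false, some a, [Sum.inl x] =>
        if a = x then [(some false, Op.pop1)] else []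
    | some false, none, [Sum.inl _, Sum.inr false] =>
        [(some true, Op.pop2)]
    | some true, none, Sum.inl x :: _ =>
        [(some false, Op.push1 ((h x).map Sum.inl))]
    | _, _, _ => []

/-- Counter word `C^j`. -/
def Cs (j : ℕ) : List (Δ ⊕ Bool) := List.replicate j (Sum.inr false)

/-- The word predicted by a store. -/
def Wd (ω : Store (Δ ⊕ Bool)) : List Δ :=
  (ω.map (fun e => match e.1 with
    | Sum.inl x => flatI h e.2.length [x]
    | Sum.inr _ => ([] : List Δ))).flatten

/-- A valid run-phase store: every entry has a letter on top and only counter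
symbols inside. -/
def VS (ω : Store (Δ ⊕ Bool)) : Prop :=
  ∀ e ∈ ω, (∃ x : Δ, e.1 = Sum.inl x) ∧ ∀ y ∈ e.2, y = Sum.inr false

lemma VS_nil : VS ([] : Store (Δ ⊕ Bool)) := by intro e he; simp at he

lemma runList (j : ℕ) : ∀ (l : List Δ) (w : List Δ) (rest : Store (Δ ⊕ Bool)),
    (Mach h d α).Steps
      (some false, flatI h j l ++ w,
        l.map (fun x => (Sum.inl x, (Cs j : List (Δ ⊕ Bool)))) ++ rest)
      (some false, w, rest) := by
  induction j with
  | zero =>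
      intro l
      induction l with
      | nil => intro w rest; simp [flatI_zero]; exact Relation.ReflTransGen.refl
      | cons x l ih =>
          intro w rest
          have e1 : flatI h 0 (x :: l) ++ w = x :: (flatI h 0 l ++ w) := by
            simp [flatI_zero]
          rw [e1]
          refine Relation.ReflTransGen.head
            (IPDA2.Step.read (a := x) (op := Op.pop1)
              (ω' := l.map (fun y => (Sum.inl y, (Cs 0 : List (Δ ⊕ Bool)))) ++ rest) ?_ ?_)
            (ih w rest)
          · simp [Mach, topsym, Cs]
          · simp [applyOp]
  | succ j ihj =>
      intro l
      induction l with
      | nil => intro w rest; simp [flatI_nil]; exact Relation.ReflTransGen.refl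
      | cons x l ih =>
          intro w rest
          have e1 : flatI h (j + 1) (x :: l) ++ w
              = flatI h j (h x) ++ (flatI h (j + 1) l ++ w) := by
            rw [flatI_cons, flatI_single, List.append_assoc]
          rw [e1]
          refine Relation.ReflTransGen.head
            (IPDA2.Step.eps (q' := some true) (op := Op.pop2)
              (ω' := (Sum.inl x, (Cs j : List (Δ ⊕ Bool))) ::
                (l.map (fun y => (Sum.inl y, (Cs (j+1) : List (Δ ⊕ Bool)))) ++ rest)) ?_ ?_)
            (Relation.ReflTransGen.head
              (IPDA2.Step.eps (q' := some false) (op := Op.push1 ((h x).map Sum.inl))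
                (ω' := (h x).map (fun y => (Sum.inl y, (Cs j : List (Δ ⊕ Bool)))) ++
                  (l.map (fun y => (Sum.inl y, (Cs (j+1) : List (Δ ⊕ Bool)))) ++ rest)) ?_ ?_) ?_)
          -- pop2 on top entry (x, C^{j+1})
          · show (some true, Op.pop2) ∈ _
            simp [Mach, topsym, Cs, List.replicate_succ]
          · show applyOp Op.pop2
              ((Sum.inl x, (Cs (j+1) : List (Δ ⊕ Bool))) ::
                (l.map (fun y => (Sum.inl y, (Cs (j+1) : List (Δ ⊕ Bool)))) ++ rest))
              = some ((Sum.inl x, (Cs j : List (Δ ⊕ Bool))) ::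
                (l.map (fun y => (Sum.inl y, (Cs (j+1) : List (Δ ⊕ Bool)))) ++ rest))
            simp [Cs, List.replicate_succ, applyOp]
          -- push1 (h x) on top entry (x, C^j)
          · show (some false, Op.push1 ((h x).map Sum.inl)) ∈ _
            cases j with
            | zero => simp [Mach, topsym, Cs]
            | succ j => simp [Mach, topsym, Cs, List.replicate_succ]
          · show applyOp (Op.push1 ((h x).map Sum.inl))
              ((Sum.inl x, (Cs j : List (Δ ⊕ Bool))) ::
                (l.map (fun y => (Sum.inl y, (Cs (j+1) : List (Δ ⊕ Bool)))) ++ rest))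
              = some ((h x).map (fun y => (Sum.inl y, (Cs j : List (Δ ⊕ Bool)))) ++
                (l.map (fun y => (Sum.inl y, (Cs (j+1) : List (Δ ⊕ Bool)))) ++ rest))
            simp [applyOp, List.map_map]
          · have step1 := ihj (h x) (flatI h (j + 1) l ++ w)
              (l.map (fun y => (Sum.inl y, (Cs (j+1) : List (Δ ⊕ Bool)))) ++ rest)
            exact step1.trans (ih w rest)

lemma guessSteps (u : List Δ) (k : ℕ) :
    (Mach h d α).Steps (none, u, [((Sum.inr true : Δ ⊕ Bool), [])])
      (none, u, [((Sum.inr true : Δ ⊕ Bool), Cs k)]) := by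
  induction k with
  | zero => exact Relation.ReflTransGen.refl
  | succ k ih =>
      refine ih.tail (IPDA2.Step.eps (q' := none) (op := Op.push2 [Sum.inr false])
        (ω' := [((Sum.inr true : Δ ⊕ Bool), Cs (k + 1))]) ?_ ?_)
      · show (none, Op.push2 [Sum.inr false]) ∈ _
        cases k with
        | zero => simp [Mach, topsym, Cs]
        | succ k => simp [Mach, topsym, Cs, List.replicate_succ]
      · show applyOp (Op.push2 [Sum.inr false]) [((Sum.inr true : Δ ⊕ Bool), Cs k)]
          = some [((Sum.inr true : Δ ⊕ Bool), Cs (k + 1))]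
        simp [applyOp, Cs, List.replicate_succ]

lemma complete (k : ℕ) :
    (Mach h d α).Accepts ((List.replicate α (flatI h k [d])).flatten) := by
  refine ⟨some false, (guessSteps h d α _ k).trans ?_⟩
  refine Relation.ReflTransGen.head
    (IPDA2.Step.eps (q' := some false) (op := Op.push1 (List.replicate α (Sum.inl d)))
      (ω' := (List.replicate α d).map (fun x => (Sum.inl x, (Cs k : List (Δ ⊕ Bool)))) ++ [])
      ?_ ?_) ?_
  · show (some false, Op.push1 (List.replicate α (Sum.inl d))) ∈ _
    cases k with
    | zero => simp [Mach, topsym, Cs]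
    | succ k => simp [Mach, topsym, Cs, List.replicate_succ]
  · show applyOp (Op.push1 (List.replicate α (Sum.inl d)))
        [((Sum.inr true : Δ ⊕ Bool), Cs k)]
      = some ((List.replicate α d).map (fun x => (Sum.inl x, (Cs k : List (Δ ⊕ Bool)))) ++ [])
    simp [applyOp, List.map_replicate]
  · have := runList h d α k (List.replicate α d) [] []
    rw [flatI_replicate] at this
    simpa [IPDA2.Steps] using this

/-- The backward invariant for soundness. -/
def MInv (q : Option Bool) (w : List Δ) (ω : Store (Δ ⊕ Bool)) : Prop :=
  (ω = [] → w = []) ∧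
  (q = some false → VS ω → w = Wd h ω) ∧
  (q = some true → ∀ x s rest, ω = (Sum.inl x, s) :: rest →
      (∀ y ∈ s, y = Sum.inr false) → VS rest →
      w = flatI h (s.length + 1) [x] ++ Wd h rest) ∧
  (q = none → ∀ s, ω = [((Sum.inr true : Δ ⊕ Bool), s)] →
      (∀ y ∈ s, y = Sum.inr false) →
      ∃ k, w = (List.replicate α (flatI h k [d])).flatten)

lemma step_inv {q q' : Option Bool} {w w' : List Δ} {ω ω' : Store (Δ ⊕ Bool)}
    (st : (Mach h d α).Step (q, w, ω) (q', w', ω'))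
    (inv : MInv h d α q' w' ω') : MInv h d α q w ω := by
  obtain ⟨inv1, inv2, inv3, inv4⟩ := inv
  cases st with
  | eps hmem happ =>
    cases q with
    | none =>
      cases ω with
      | nil => simp [Mach, topsym] at hmem
      | cons e rest =>
        obtain ⟨A, s⟩ := e
        cases A with
        | inl x => simp [Mach, topsym] at hmem
        | inr b =>
          cases b with
          | false => simp [Mach, topsym] at hmem
          | true =>
            simp only [Mach, topsym] at hmem
            refine ⟨by simp, by simp, by simp, ?_⟩
            rintro - s0 hωeq hC
            obtain ⟨hs0, hrest⟩ : s = s0 ∧ rest = [] := by simpa using hωeq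
            subst hs0; subst hrest
            simp only [List.mem_cons, List.mem_singleton, Prod.mk.injEq,
              List.not_mem_nil, or_false] at hmem
            rcases hmem with ⟨rfl, rfl⟩ | ⟨rfl, rfl⟩
            · -- push2 [C] : keep guessing
              simp only [applyOp, Option.some.injEq] at happ
              subst happ
              obtain ⟨k, hk⟩ := inv4 rfl (Sum.inr false :: s) rfl
                (by intro y hy
                    rcases List.mem_cons.mp hy with rfl | hy
                    · rfl
                    · exact hC y hy)
              exact ⟨k, hk⟩
            · -- push1 (replicate α d) : start running
              simp only [applyOp, Option.some.injEq, List.map_replicate,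
                List.append_nil] at happ
              subst happ
              refine ⟨s.length, ?_⟩
              have hvs : VS (List.replicate α ((Sum.inl d : Δ ⊕ Bool), s)) := by
                intro e he
                rw [List.eq_of_mem_replicate he]
                exact ⟨⟨d, rfl⟩, hC⟩
              have hw := inv2 rfl hvs
              rw [hw]
              simp [Wd, List.map_replicate]
    | some b =>
      cases b with
      | false =>
        -- only possible: pop2 with top entry (x, C :: s')
        cases ω with
        | nil => simp [Mach, topsym] at hmem
        | cons e rest =>
          obtain ⟨A, s⟩ := e
          cases A with
          | inr b => simp [Mach, topsym] at hmem
          | inl x =>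
            cases s with
            | nil => simp [Mach, topsym] at hmem
            | cons y s' =>
              cases y with
              | inl z => simp [Mach, topsym] at hmem
              | inr b =>
                cases b with
                | true => simp [Mach, topsym] at hmem
                | false =>
                  simp only [Mach, topsym, List.take_succ_cons, List.take_zero,
                    List.mem_singleton, Prod.mk.injEq] at hmem
                  obtain ⟨rfl, rfl⟩ := hmem
                  simp only [applyOp, Option.some.injEq] at happ
                  subst happ
                  refine ⟨by simp, ?_, by simp, by simp⟩
                  rintro - hVS
                  obtain ⟨⟨hxx, hCs⟩, hrest⟩ :
                      ((∃ x', (Sum.inl x : Δ ⊕ Bool) = Sum.inl x') ∧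
                        ∀ y ∈ Sum.inr false :: s', y = (Sum.inr false : Δ ⊕ Bool)) ∧
                        VS rest := by
                    refine ⟨hVS (Sum.inl x, Sum.inr false :: s') (by simp), fun e he => hVS _ (List.mem_cons_of_mem _ he)⟩
                  have hCs' : ∀ y ∈ s', y = (Sum.inr false : Δ ⊕ Bool) :=
                    fun y hy => hCs y (List.mem_cons_of_mem _ hy)
                  have hw := inv3 rfl x s' rest rfl hCs' hrest
                  rw [hw]
                  simp [Wd]
      | true =>
        -- only possible: push1 (h x) with top entry (x, s)
        cases ω with
        | nil => simp [Mach, topsym] at hmem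
        | cons e rest =>
          obtain ⟨A, s⟩ := e
          cases A with
          | inr b => simp [Mach, topsym] at hmem
          | inl x =>
            simp only [Mach, topsym, List.mem_singleton, Prod.mk.injEq] at hmem
            obtain ⟨rfl, rfl⟩ := hmem
            simp only [applyOp, Option.some.injEq, List.map_map] at happ
            subst happ
            refine ⟨by simp, by simp, ?_, by simp⟩
            rintro - x0 s0 rest0 heq hC hVS
            obtain ⟨h1, h2, h3⟩ :
                x0 = x ∧ s0 = s ∧ rest0 = rest := by
              simpa [and_assoc] using heq.symm
            rw [h1, h2, h3]
            rw [h2] at hC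
            rw [h3] at hVS
            have hvs : VS ((h x).map ((fun A => (A, s)) ∘ Sum.inl) ++ rest) := by
              intro e he
              rcases List.mem_append.mp he with he | he
              · obtain ⟨y, -, rfl⟩ := List.mem_map.mp he
                exact ⟨⟨y, rfl⟩, hC⟩
              · exact hVS e he
            have hw := inv2 rfl hvs
            rw [hw]
            have hwd : Wd h ((h x).map ((fun A => (A, s)) ∘ Sum.inl) ++ rest)
                = flatI h s.length (h x) ++ Wd h rest := by
              simp [Wd, List.map_map, flatI_eq_flatten h s.length (h x)]
              rfl
            rw [hwd, flatI_single]
  | read hmem happ =>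
    cases q with
    | none =>
      cases ω with
      | nil => simp [Mach, topsym] at hmem
      | cons e rest =>
        obtain ⟨A, s⟩ := e
        rcases A with x | b
        · simp [Mach, topsym] at hmem
        · cases b <;> simp [Mach, topsym] at hmem
    | some b =>
      cases b with
      | true =>
        cases ω with
        | nil => simp [Mach, topsym] at hmem
        | cons e rest =>
          obtain ⟨A, s⟩ := e
          rcases A with x | b
          · simp [Mach, topsym] at hmem
          · simp [Mach, topsym] at hmem
      | false =>
        cases ω with
        | nil => simp [Mach, topsym] at hmem
        | cons e rest =>
          obtain ⟨A, s⟩ := e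
          cases A with
          | inr b => simp [Mach, topsym] at hmem
          | inl x =>
            cases s with
            | cons y s' => simp [Mach, topsym] at hmem
            | nil =>
              simp only [Mach, topsym, List.take_nil] at hmem
              split at hmem
              · next ha =>
                  subst ha
                  simp only [List.mem_singleton, Prod.mk.injEq] at hmem
                  obtain ⟨rfl, rfl⟩ := hmem
                  simp only [applyOp, Option.some.injEq] at happ
                  subst happ
                  refine ⟨by simp, ?_, by simp, by simp⟩
                  rintro - hVS
                  have hrest : VS rest := fun e he => hVS _ (List.mem_cons_of_mem _ he)
                  have hw := inv2 rfl hrest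
                  rw [hw]
                  simp [Wd, flatI_zero]
              · simp at hmem

lemma sound_aux {c : Config (Option Bool) Δ (Δ ⊕ Bool)} {qf : Option Bool}
    (hs : (Mach h d α).Steps c (qf, [], [])) : MInv h d α c.1 c.2.1 c.2.2 := by
  induction hs using Relation.ReflTransGen.head_induction_on with
  | refl =>
      refine ⟨fun _ => rfl, fun _ _ => by simp [Wd], ?_, ?_⟩
      · intro _ x s rest heq; exact absurd heq (by simp)
      · intro _ s heq; exact absurd heq (by simp)
  | @head a c st hsteps ih =>
      obtain ⟨q1, w1, ω1⟩ := a
      obtain ⟨q2, w2, ω2⟩ := c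
      exact step_inv h d α st ih

lemma sound {q qf : Option Bool} {w : List Δ} {ω : Store (Δ ⊕ Bool)}
    (hs : (Mach h d α).Steps (q, w, ω) (qf, [], [])) : MInv h d α q w ω :=
  sound_aux h d α hs

end Aux

/-- Let `Δ` be a finite alphabet, `h` a substitution on `Δ` (extended to words as
`w ↦ w.flatMap h`) with `h x` nonempty for every letter `x`, let `d ∈ Δ` and let
`α ≥ 1`. Then there exists a 2-iterated pushdown automaton with input alphabet `Δ` that
accepts a word `u` if and only if `u = (h^k(d))^α` for some `k : ℕ`, where `h^k(d)` is
the level-`k` word of the tree with root labelled `d` in which the sons of a node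
labelled `x` are given, in order, by `h x`. -/
theorem exists_ipda2_substitution_levels (Δ : Type) [Fintype Δ] (h : Δ → List Δ)
    (hne : ∀ x : Δ, h x ≠ []) (d : Δ) (α : ℕ) (hα : 1 ≤ α) :
    ∃ (Q Γ : Type) (_ : Fintype Q) (_ : Fintype Γ) (M : IPDA2 Q Δ Γ),
      ∀ u : List Δ,
        M.Accepts u ↔
          ∃ k : ℕ, u = (List.replicate α ((fun w => w.flatMap h)^[k] [d])).flatten := by
  refine ⟨Option Bool, Δ ⊕ Bool, inferInstance, inferInstance, Mach h d α, fun u => ⟨?_, ?_⟩⟩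
  · rintro ⟨q, hsteps⟩
    have hinv := sound h d α hsteps
    obtain ⟨-, -, -, h4⟩ := hinv
    obtain ⟨k, hk⟩ := h4 rfl [] rfl (by simp)
    exact ⟨k, hk⟩
  · rintro ⟨k, rfl⟩
    exact complete h d α k
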